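/- Let φ be continuous on B_R ⊆ ℝ^d and suppose for some s ∈ (h, R) and a vector p ∈ ℝ^d that s^{-2} osc_{B_s}(φ(y) − p·y) ≤ M. Then |p| ≤ (2s)^{-1} osc_{B_s}(φ(y) − p·y) + (2s)^{-1} osc_{B_s} φ, and consequently (2/s) osc_{B_{s/2}} φ ≤ 3 s M + s^{-1} osc_{B_s} φ. -/

import Mathlib

open Metric Set

/-- Oscillation of a function over a set. -/
noncomputable def osc {d : ℕ} (f : EuclideanSpace ℝ (Fin d) → ℝ)
    (U : Set (EuclideanSpace ℝ (Fin d))) : ℝ :=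
  sSup (f '' U) - sInf (f '' U)

/-- Oscillation bounds differences. -/
lemma osc_pair {d : ℕ} {f : EuclideanSpace ℝ (Fin d) → ℝ}
    {U : Set (EuclideanSpace ℝ (Fin d))} (hA : BddAbove (f '' U)) (hB : BddBelow (f '' U))
    {x y : EuclideanSpace ℝ (Fin d)} (hx : x ∈ U) (hy : y ∈ U) :
    f x - f y ≤ osc f U := by
  have h1 : f x ≤ sSup (f '' U) := le_csSup hA ⟨x, hx, rfl⟩
  have h2 : sInf (f '' U) ≤ f y := csInf_le hB ⟨y, hy, rfl⟩
  unfold osc; linarith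

/-- If `s^{-2} osc_{B_s}(φ − p·) ≤ M` then `|p| ≤ (2s)⁻¹ osc_{B_s}(φ − p·) + (2s)⁻¹ osc_{B_s} φ`
and `(2/s) osc_{B_{s/2}} φ ≤ 3 s M + s⁻¹ osc_{B_s} φ`. -/
theorem stmt2 {d : ℕ} (hd : 1 ≤ d) (h R s M : ℝ) (hh : 0 ≤ h) (hs : h < s) (hsR : s < R)
    (hM : 0 ≤ M) (p : EuclideanSpace ℝ (Fin d))
    (φ : EuclideanSpace ℝ (Fin d) → ℝ)
    (hφ : ContinuousOn φ (ball (0 : EuclideanSpace ℝ (Fin d)) R))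
    (hbd : ∃ B : ℝ, ∀ x ∈ ball (0 : EuclideanSpace ℝ (Fin d)) R, |φ x| ≤ B)
    (hMp : (s ^ 2)⁻¹ * osc (fun y => φ y - (inner ℝ p y : ℝ)) (ball 0 s) ≤ M) :
    ‖p‖ ≤ (2 * s)⁻¹ * osc (fun y => φ y - (inner ℝ p y : ℝ)) (ball 0 s)
        + (2 * s)⁻¹ * osc φ (ball 0 s)
    ∧ (2 / s) * osc φ (ball 0 (s / 2)) ≤ 3 * s * M + s⁻¹ * osc φ (ball 0 s) := by
  obtain ⟨B, hB⟩ := hbd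
  have hs0 : 0 < s := lt_of_le_of_lt hh hs
  set ψ : EuclideanSpace ℝ (Fin d) → ℝ := fun y => φ y - (inner ℝ p y : ℝ) with hψ
  have hsub : ball (0 : EuclideanSpace ℝ (Fin d)) s ⊆ ball 0 R := ball_subset_ball hsR.le
  have hsub2 : ball (0 : EuclideanSpace ℝ (Fin d)) (s / 2) ⊆ ball 0 s :=
    ball_subset_ball (by linarith)
  have hφbd : ∀ x ∈ ball (0 : EuclideanSpace ℝ (Fin d)) s, |φ x| ≤ B :=
    fun x hx => hB x (hsub hx)
  have hψbd : ∀ x ∈ ball (0 : EuclideanSpace ℝ (Fin d)) s, |ψ x| ≤ B + ‖p‖ * s := by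
    intro x hx
    have hxn : ‖x‖ < s := by simpa [mem_ball_zero_iff] using hx
    have hip : |(inner ℝ p x : ℝ)| ≤ ‖p‖ * ‖x‖ := abs_real_inner_le_norm p x
    have : |ψ x| ≤ |φ x| + |(inner ℝ p x : ℝ)| := abs_sub _ _
    have h2 : ‖p‖ * ‖x‖ ≤ ‖p‖ * s := mul_le_mul_of_nonneg_left hxn.le (norm_nonneg p)
    have := hφbd x hx
    linarith
  have hφA : BddAbove (φ '' ball (0 : EuclideanSpace ℝ (Fin d)) s) := by
    refine ⟨B, ?_⟩; rintro a ⟨x, hx, rfl⟩; linarith [abs_le.mp (hφbd x hx)]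
  have hφB : BddBelow (φ '' ball (0 : EuclideanSpace ℝ (Fin d)) s) := by
    refine ⟨-B, ?_⟩; rintro a ⟨x, hx, rfl⟩; linarith [(abs_le.mp (hφbd x hx)).1]
  have hψA : BddAbove (ψ '' ball (0 : EuclideanSpace ℝ (Fin d)) s) := by
    refine ⟨B + ‖p‖ * s, ?_⟩; rintro a ⟨x, hx, rfl⟩; linarith [(abs_le.mp (hψbd x hx)).2]
  have hψB : BddBelow (ψ '' ball (0 : EuclideanSpace ℝ (Fin d)) s) := by
    refine ⟨-(B + ‖p‖ * s), ?_⟩; rintro a ⟨x, hx, rfl⟩; linarith [(abs_le.mp (hψbd x hx)).1]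
  have hne : (0 : EuclideanSpace ℝ (Fin d)) ∈ ball (0 : EuclideanSpace ℝ (Fin d)) s :=
    mem_ball_self hs0
  have hosc_ψ_nonneg : 0 ≤ osc ψ (ball 0 s) := by
    have := osc_pair hψA hψB hne hne; simpa using this
  have hosc_φ_nonneg : 0 ≤ osc φ (ball 0 s) := by
    have := osc_pair hφA hφB hne hne; simpa using this
  have key : ∀ y ∈ ball (0 : EuclideanSpace ℝ (Fin d)) s,
      2 * (inner ℝ p y : ℝ) ≤ osc ψ (ball 0 s) + osc φ (ball 0 s) := by
    intro y hy
    have hmy : -y ∈ ball (0 : EuclideanSpace ℝ (Fin d)) s := by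
      simpa [mem_ball_zero_iff] using (by simpa [mem_ball_zero_iff] using hy : ‖y‖ < s)
    have h1 : ψ (-y) - ψ y ≤ osc ψ (ball 0 s) := osc_pair hψA hψB hmy hy
    have h2 : φ y - φ (-y) ≤ osc φ (ball 0 s) := osc_pair hφA hφB hy hmy
    have hexp : ψ (-y) - ψ y = φ (-y) - φ y + 2 * (inner ℝ p y : ℝ) := by
      simp [hψ, inner_neg_right]; ring
    rw [hexp] at h1
    linarith
  have hp2s : 2 * s * ‖p‖ ≤ osc ψ (ball 0 s) + osc φ (ball 0 s) := by
    rcases eq_or_ne p 0 with rfl | hp0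
    · simp; linarith
    · have hpn : 0 < ‖p‖ := norm_pos_iff.mpr hp0
      have ht : ∀ t : ℝ, 0 ≤ t → t < s →
          2 * t * ‖p‖ ≤ osc ψ (ball 0 s) + osc φ (ball 0 s) := by
        intro t ht0 hts
        set y : EuclideanSpace ℝ (Fin d) := (t / ‖p‖) • p with hy
        have hyn : ‖y‖ = t := by
          rw [hy, norm_smul, Real.norm_eq_abs, abs_div, abs_of_nonneg ht0,
            abs_of_pos hpn, div_mul_cancel₀ _ hpn.ne']
        have hyb : y ∈ ball (0 : EuclideanSpace ℝ (Fin d)) s := by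
          rw [mem_ball_zero_iff, hyn]; exact hts
        have hiy : (inner ℝ p y : ℝ) = t * ‖p‖ := by
          rw [hy, real_inner_smul_right, real_inner_self_eq_norm_sq]
          field_simp
        have := key y hyb
        rw [hiy] at this; linarith
      by_contra hcon
      push_neg at hcon
      set D := osc ψ (ball 0 s) + osc φ (ball 0 s) with hD
      have hD0 : 0 ≤ D := by positivity
      set t : ℝ := (D / (2 * ‖p‖) + s) / 2 with htdef
      have ht1 : D / (2 * ‖p‖) < s := by
        rw [div_lt_iff₀ (by positivity)]; nlinarith [hcon]
      have ht0 : 0 ≤ t := by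
        have : 0 ≤ D / (2 * ‖p‖) := by positivity
        rw [htdef]; linarith
      have hts : t < s := by rw [htdef]; linarith
      have := ht t ht0 hts
      have htgt : D < 2 * t * ‖p‖ := by
        have h2 : D / (2 * ‖p‖) < t := by rw [htdef]; linarith
        calc D = D / (2 * ‖p‖) * (2 * ‖p‖) := by field_simp
        _ < t * (2 * ‖p‖) := mul_lt_mul_of_pos_right h2 (by positivity)
        _ = 2 * t * ‖p‖ := by ring
      linarith
  have part1 : ‖p‖ ≤ (2 * s)⁻¹ * osc ψ (ball 0 s) + (2 * s)⁻¹ * osc φ (ball 0 s) := by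
    rw [inv_mul_eq_div, inv_mul_eq_div, ← add_div, le_div_iff₀ (by positivity)]
    linarith
  refine ⟨part1, ?_⟩
  have hosc_half : osc φ (ball 0 (s / 2)) ≤ osc ψ (ball 0 s) + s * ‖p‖ := by
    have hne2 : (φ '' ball (0 : EuclideanSpace ℝ (Fin d)) (s / 2)).Nonempty :=
      ⟨φ 0, 0, mem_ball_self (by positivity), rfl⟩
    unfold osc
    rw [sub_le_iff_le_add]
    apply csSup_le hne2
    rintro a ⟨x, hx, rfl⟩
    have hinf : φ x - (osc ψ (ball 0 s) + s * ‖p‖) ≤ sInf (φ '' ball 0 (s / 2)) := by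
      apply le_csInf hne2
      rintro b ⟨y, hy, rfl⟩
      have hxs := hsub2 hx
      have hys := hsub2 hy
      have h1 : ψ x - ψ y ≤ osc ψ (ball 0 s) := osc_pair hψA hψB hxs hys
      have hxn : ‖x‖ < s / 2 := by simpa [mem_ball_zero_iff] using hx
      have hyn : ‖y‖ < s / 2 := by simpa [mem_ball_zero_iff] using hy
      have h2 : (inner ℝ p (x - y) : ℝ) ≤ ‖p‖ * s := by
        calc (inner ℝ p (x - y) : ℝ) ≤ ‖p‖ * ‖x - y‖ := real_inner_le_norm p _
        _ ≤ ‖p‖ * s := by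
            have : ‖x - y‖ ≤ ‖x‖ + ‖y‖ := norm_sub_le x y
            exact mul_le_mul_of_nonneg_left (by linarith) (norm_nonneg p)
      have hexp : φ x - φ y = ψ x - ψ y + (inner ℝ p (x - y) : ℝ) := by
        simp [hψ, inner_sub_right]; ring
      linarith [hexp]
    unfold osc at hinf
    linarith
  have hψM : osc ψ (ball 0 s) ≤ s ^ 2 * M := by
    have hs2 : (0 : ℝ) < s ^ 2 := by positivity
    calc osc ψ (ball 0 s) = s ^ 2 * ((s ^ 2)⁻¹ * osc ψ (ball 0 s)) := by field_simp
    _ ≤ s ^ 2 * M := mul_le_mul_of_nonneg_left hMp hs2.le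
  rw [div_mul_eq_mul_div, div_le_iff₀ hs0]
  have hexp2 : (3 * s * M + s⁻¹ * osc φ (ball 0 s)) * s = 3 * s ^ 2 * M + osc φ (ball 0 s) := by
    field_simp
  rw [hexp2]
  nlinarith [hosc_half, hψM, hp2s, mul_le_mul_of_nonneg_left hψM hs0.le]
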